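/- Fix a C-sequence. Let β < ω₁ be a limit ordinal. Then for every ξ < β there exists α₀ < β such that for every α with α₀ ≤ α < β, the lower trace L(α,β) is nonempty and min L(α,β) > ξ; that is, min L(α,β) tends to β as α tends to β. -/

import Mathlib

noncomputable section

open Set Ordinal

/-- The first uncountable ordinal. -/
def omega1 : Ordinal := (Cardinal.aleph 1).ord

/-- `C` is a C-sequence: `C 0 = ∅`, `C (α+1) = {α}`, and for every limit `α < ω₁`,
`C α` is a cofinal subset of `α` meeting every initial segment in a finite set. -/
def IsCSeq (C : Ordinal → Set Ordinal) : Prop :=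
  C 0 = ∅ ∧ (∀ α, C (α + 1) = {α}) ∧
  ∀ α, α < omega1 → Order.IsSuccLimit α →
    (∀ ξ ∈ C α, ξ < α) ∧ (∀ ξ < α, ∃ η ∈ C α, ξ ≤ η) ∧ ∀ ξ < α, (C α ∩ Iio ξ).Finite

/-- `min (C β \ α)`. -/
def minAbove (C : Ordinal → Set Ordinal) (α β : Ordinal) : Ordinal :=
  sInf {ξ ∈ C β | α ≤ ξ}

/-- `max (C β ∩ α)`. -/
def maxBelow (C : Ordinal → Set Ordinal) (α β : Ordinal) : Ordinal :=
  sSup (C β ∩ Iio α)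

/-- `U` is the upper trace function of the C-sequence `C`:
`U(α,α) = ∅` and `U(α,β) = U(α, min (C β \ α)) ∪ {β}` for `α < β`. -/
def UpperSpec (C : Ordinal → Set Ordinal) (U : Ordinal → Ordinal → Set Ordinal) : Prop :=
  (∀ α, U α α = ∅) ∧ ∀ α β, α < β → U α β = U α (minAbove C α β) ∪ {β}

/-- `L` is the lower trace function of the C-sequence `C`: `L(α,α) = ∅`,
`L(α,β) = L(α, min (C β \ α))` when `C β ∩ α = ∅`, and otherwise
`L(α,β) = {ζ ∈ L(α, min (C β \ α)) ∪ {max (C β ∩ α)} : ζ ≥ max (C β ∩ α)}`. -/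
def LowerSpec (C : Ordinal → Set Ordinal) (L : Ordinal → Ordinal → Set Ordinal) : Prop :=
  (∀ α, L α α = ∅) ∧
  (∀ α β, α < β → C β ∩ Iio α = ∅ → L α β = L α (minAbove C α β)) ∧
  ∀ α β, α < β → (C β ∩ Iio α).Nonempty →
    L α β = {ζ ∈ L α (minAbove C α β) ∪ {maxBelow C α β} | maxBelow C α β ≤ ζ}

/-- For a limit ordinal `β < ω₁`: for every `ξ < β` there is `α₀ < β` such that for all
`α` with `α₀ ≤ α < β`, the lower trace `L(α,β)` is nonempty and `min L(α,β) > ξ`;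
i.e. `min L(α,β) → β` as `α → β`. -/
theorem stmt4 (C : Ordinal → Set Ordinal) (hC : IsCSeq C)
    (L : Ordinal → Ordinal → Set Ordinal) (hL : LowerSpec C L)
    (β : Ordinal) (hβ : β < omega1) (hlim : Order.IsSuccLimit β) :
    ∀ ξ < β, ∃ α₀ < β, ∀ α, α₀ ≤ α → α < β →
      (L α β).Nonempty ∧ ξ < sInf (L α β) := by
  intro ξ hξ
  obtain ⟨hCβ, hcof, _⟩ := hC.2.2 β hβ hlim
  obtain ⟨η, hηC, hη⟩ := hcof (ξ + 1) (hlim.succ_lt hξ)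
  refine ⟨η + 1, hlim.succ_lt (hCβ η hηC), fun α hα₀ hαβ => ?_⟩
  have hηα : η < α := lt_of_lt_of_le (lt_add_one η) hα₀
  have hne : (C β ∩ Iio α).Nonempty := ⟨η, hηC, hηα⟩
  have hbdd : BddAbove (C β ∩ Iio α) := ⟨α, fun x hx => le_of_lt hx.2⟩
  have hmb : η ≤ maxBelow C α β := le_csSup hbdd ⟨hηC, hηα⟩
  have hξmb : ξ < maxBelow C α β := lt_of_lt_of_le (lt_of_lt_of_le (lt_add_one ξ) hη) hmb
  have hLαβ := hL.2.2 α β hαβ hne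
  have hmem : maxBelow C α β ∈ L α β := by
    rw [hLαβ]; exact ⟨Or.inr rfl, le_rfl⟩
  have hnonempty : (L α β).Nonempty := ⟨_, hmem⟩
  refine ⟨hnonempty, lt_of_lt_of_le hξmb ?_⟩
  have hmemInf : sInf (L α β) ∈ L α β := csInf_mem hnonempty
  exact (hLαβ ▸ hmemInf : _ ∈ {ζ | ζ ∈ L α (minAbove C α β) ∪ {maxBelow C α β} ∧ maxBelow C α β ≤ ζ}).2
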